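/- Let V^k be a classical solution of the auxiliary HJB equation in C^{2,τ}([0, z̄]) with Neumann boundary conditions, satisfying (V^k)' > 0 in (0, z̄). Then (V^k)''(0) > 0 and (V^k)''(z̄) < 0. -/

import Mathlib

open Set Filter Topology

set_option maxHeartbeats 1000000 in
/-- For a C^{2,τ} solution of the auxiliary HJB equation with
strictly increasing value function in the interior, V''(0) > 0 and V''(z̄) < 0. -/
theorem stmt_7 (zb σ ρ w B k α γ : ℝ)
    (hz : 0 < zb) (hσ : 0 < σ) (hρ : 0 < ρ) (hw : 0 < w) (hB : 0 < B)
    (hk : 0 ≤ k) (hα : α ∈ Set.Ioo (0:ℝ) 1) (hγ : γ ∈ Set.Ioo (0:ℝ) 1)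
    (V : ℝ → ℝ)
    (hV : DifferentiableOn ℝ V (Set.Icc 0 zb))
    (hV' : ContinuousOn (deriv V) (Set.Icc 0 zb))
    (hV'' : ∀ z ∈ Set.Ioo 0 zb, DifferentiableAt ℝ (deriv V) z)
    (hV''c : ContinuousOn (deriv (deriv V)) (Set.Icc 0 zb))
    (τ C : ℝ) (hτ : τ ∈ Set.Ioo (0:ℝ) 1) (hC : 0 ≤ C)
    (hHolder : ∀ x ∈ Set.Icc 0 zb, ∀ y ∈ Set.Icc 0 zb,
      |deriv (deriv V) x - deriv (deriv V) y| ≤ C * |x - y| ^ τ)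
    (heq : ∀ z ∈ Set.Ioo 0 zb,
      -(σ^2/2) * deriv (deriv V) z + ρ * V z -
        ((1-γ) * (γ/w) ^ (γ/(1-γ)) * (max 0 (deriv V z)) ^ (1/(1-γ))
          + k * deriv V z + z ^ α / B ^ (α-1)) = 0)
    (hbc0 : deriv V 0 = 0) (hbc1 : deriv V zb = 0)
    (hpos : ∀ z ∈ Set.Ioo 0 zb, 0 < deriv V z) :
    0 < deriv (deriv V) 0 ∧ deriv (deriv V) zb < 0 := by
  obtain ⟨hα0, hα1⟩ := hα
  obtain ⟨hγ0, hγ1⟩ := hγ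
  obtain ⟨hτ0, hτ1⟩ := hτ
  set W : ℝ → ℝ := deriv V with hWdef
  set W2 : ℝ → ℝ := deriv W with hW2def
  have h1γ : (0:ℝ) < 1 - γ := by linarith
  set c0 : ℝ := (1-γ) * (γ/w) ^ (γ/(1-γ)) with hc0def
  have hc0 : 0 < c0 := mul_pos h1γ (Real.rpow_pos_of_pos (div_pos hγ0 hw) _)
  set q : ℝ := 1/(1-γ) with hqdef
  have hq0 : 0 < q := by positivity
  have hq1 : 1 ≤ q := by rw [hqdef, le_div_iff₀ h1γ]; linarith
  have hσ2 : 0 < σ^2/2 := by positivity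
  set Q : ℝ := B ^ (1-α) with hQdef
  have hQ : 0 < Q := Real.rpow_pos_of_pos hB _
  -- rewrite the equation
  have hEq : ∀ z ∈ Set.Ioo 0 zb,
      σ^2/2 * W2 z = ρ * V z - c0 * (max 0 (W z))^q - k * W z - z^α * Q := by
    intro z hzz
    have h1 := heq z hzz
    have h2 : z^α / B^(α-1) = z^α * Q := by
      rw [hQdef, div_eq_mul_inv, ← Real.rpow_neg hB.le, neg_sub]
    rw [h2] at h1
    linarith
  -- extend the equation to the closed interval by continuity
  have hEqc : ∀ x ∈ Set.Icc 0 zb,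
      σ^2/2 * W2 x = ρ * V x - c0 * (max 0 (W x))^q - k * W x - x^α * Q := by
    intro x hx
    haveI : (𝓝[Set.Ioo 0 zb] x).NeBot := by
      refine mem_closure_iff_nhdsWithin_neBot.mp ?_
      rwa [closure_Ioo hz.ne]
    have hVt : Filter.Tendsto V (𝓝[Set.Ioo 0 zb] x) (𝓝 (V x)) :=
      (hV.continuousOn x hx).mono Set.Ioo_subset_Icc_self
    have hWt : Filter.Tendsto W (𝓝[Set.Ioo 0 zb] x) (𝓝 (W x)) :=
      (hV' x hx).mono Set.Ioo_subset_Icc_self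
    have hW2t : Filter.Tendsto W2 (𝓝[Set.Ioo 0 zb] x) (𝓝 (W2 x)) :=
      (hV''c x hx).mono Set.Ioo_subset_Icc_self
    have hmax : Filter.Tendsto (fun z => max 0 (W z)) (𝓝[Set.Ioo 0 zb] x)
        (𝓝 (max 0 (W x))) := tendsto_const_nhds.max hWt
    have hpow : Filter.Tendsto (fun z => (max 0 (W z))^q) (𝓝[Set.Ioo 0 zb] x)
        (𝓝 ((max 0 (W x))^q)) :=
      ((Real.continuousAt_rpow_const _ q (Or.inr hq0.le)).tendsto).comp hmax
    have hzα : Filter.Tendsto (fun z : ℝ => z^α) (𝓝[Set.Ioo 0 zb] x) (𝓝 (x^α)) :=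
      (Real.continuousAt_rpow_const x α (Or.inr hα0.le)).continuousWithinAt
    have hL : Filter.Tendsto (fun z => σ^2/2 * W2 z) (𝓝[Set.Ioo 0 zb] x)
        (𝓝 (σ^2/2 * W2 x)) := hW2t.const_mul _
    have hR : Filter.Tendsto (fun z => σ^2/2 * W2 z) (𝓝[Set.Ioo 0 zb] x)
        (𝓝 (ρ * V x - c0 * (max 0 (W x))^q - k * W x - x^α * Q)) := by
      refine Filter.Tendsto.congr' ?_
        (((((hVt.const_mul ρ).sub (hpow.const_mul c0)).sub (hWt.const_mul k)).sub
          (hzα.mul_const Q)))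
      exact Filter.eventually_of_mem self_mem_nhdsWithin fun z hzz => (hEq z hzz).symm
    exact tendsto_nhds_unique hL hR
  -- values at the endpoints
  have hend0 : σ^2/2 * W2 0 = ρ * V 0 := by
    have h := hEqc 0 (Set.left_mem_Icc.mpr hz.le)
    rw [hbc0] at h
    simpa [Real.zero_rpow hq0.ne', Real.zero_rpow hα0.ne'] using h
  have hendzb : σ^2/2 * W2 zb = ρ * V zb - zb^α * Q := by
    have h := hEqc zb (Set.right_mem_Icc.mpr hz.le)
    rw [hbc1] at h
    simpa [Real.zero_rpow hq0.ne'] using h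
  constructor
  · -- Part A: 0 < W2 0
    by_contra hcon
    push_neg at hcon
    have hV0 : ρ * V 0 ≤ 0 := by
      rw [← hend0]; exact mul_nonpos_of_nonneg_of_nonpos hσ2.le hcon
    -- first-order bound: W z ≤ C * z^τ * z on (0, zb)
    have hWb : ∀ z ∈ Set.Ioo 0 zb, W z ≤ C * z^τ * z := by
      intro z hzz
      obtain ⟨c, hc, hslope⟩ := exists_hasDerivAt_eq_slope W W2 hzz.1
        (hV'.mono (Set.Icc_subset_Icc le_rfl hzz.2.le))
        (fun x hx => (hV'' x ⟨hx.1, hx.2.trans hzz.2⟩).hasDerivAt)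
      have hcIcc : c ∈ Set.Icc 0 zb := ⟨hc.1.le, (hc.2.trans hzz.2).le⟩
      have h1 := hHolder c hcIcc 0 (Set.left_mem_Icc.mpr hz.le)
      have habs : |c - 0| = c := by rw [sub_zero, abs_of_pos hc.1]
      rw [habs] at h1
      have hcτ : c^τ ≤ z^τ := Real.rpow_le_rpow hc.1.le hc.2.le hτ0.le
      have hW2c : W2 c ≤ C * z^τ := by
        have h2 : W2 c - W2 0 ≤ C * c^τ := (le_abs_self _).trans h1
        have h3 : C * c^τ ≤ C * z^τ := mul_le_mul_of_nonneg_left hcτ hC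
        linarith
      have hWz : W z = W2 c * z := by
        rw [hbc0, sub_zero, sub_zero, eq_div_iff hzz.1.ne'] at hslope
        linarith
      rw [hWz]
      exact mul_le_mul_of_nonneg_right hW2c hzz.1.le
    -- zeroth-order bound: V z ≤ V 0 + C * z^τ * z * z on (0, zb)
    have hVb : ∀ z ∈ Set.Ioo 0 zb, V z ≤ V 0 + C * z^τ * z * z := by
      intro z hzz
      obtain ⟨c, hc, hslope⟩ := exists_hasDerivAt_eq_slope V W hzz.1
        (hV.continuousOn.mono (Set.Icc_subset_Icc le_rfl hzz.2.le))
        (fun x hx => by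
          have hx' : x ∈ Set.Ioo 0 zb := ⟨hx.1, hx.2.trans hzz.2⟩
          exact (hV.differentiableAt (Icc_mem_nhds hx'.1 hx'.2)).hasDerivAt)
      have hc' : c ∈ Set.Ioo 0 zb := ⟨hc.1, hc.2.trans hzz.2⟩
      have hWc : W c ≤ C * z^τ * z := by
        have := hWb c hc'
        have hcτ : c^τ ≤ z^τ := Real.rpow_le_rpow hc.1.le hc.2.le hτ0.le
        have h3 : C * c^τ * c ≤ C * z^τ * z := by
          have h4 : 0 ≤ C * z^τ := mul_nonneg hC (Real.rpow_nonneg hzz.1.le τ)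
          calc C * c^τ * c ≤ C * z^τ * c :=
                mul_le_mul_of_nonneg_right (mul_le_mul_of_nonneg_left hcτ hC) hc.1.le
            _ ≤ C * z^τ * z := mul_le_mul_of_nonneg_left hc.2.le h4
        linarith
      have hVz : V z = W c * z + V 0 := by
        rw [sub_zero, eq_div_iff hzz.1.ne'] at hslope
        linarith
      rw [hVz]
      have := mul_le_mul_of_nonneg_right hWc hzz.1.le
      nlinarith
    -- eventually W2 z < 0 near 0
    have hev : ∀ᶠ z in 𝓝[>] (0:ℝ), W2 z < 0 := by
      have ht0 : Filter.Tendsto (fun z : ℝ => ρ * C * z^(2+τ-α)) (𝓝[>] (0:ℝ)) (𝓝 0) := by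
        have h1 : Filter.Tendsto (fun z : ℝ => z^(2+τ-α)) (𝓝 (0:ℝ)) (𝓝 ((0:ℝ)^(2+τ-α))) :=
          (Real.continuousAt_rpow_const 0 (2+τ-α) (Or.inr (by linarith))).tendsto
        rw [Real.zero_rpow (by linarith : (2:ℝ)+τ-α ≠ 0)] at h1
        have h2 : Filter.Tendsto (fun z : ℝ => ρ * C * z^(2+τ-α)) (𝓝[>] (0:ℝ))
            (𝓝 (ρ * C * 0)) :=
          Filter.Tendsto.mono_left (h1.const_mul (ρ * C)) nhdsWithin_le_nhds
        simpa using h2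
      have hsmall : ∀ᶠ z in 𝓝[>] (0:ℝ), ρ * C * z^(2+τ-α) < Q :=
        ht0.eventually_lt_const hQ
      have hmem : ∀ᶠ z in 𝓝[>] (0:ℝ), z ∈ Set.Ioo 0 zb :=
        Filter.eventually_of_mem (Ioo_mem_nhdsGT hz) fun z hzz => hzz
      filter_upwards [hsmall, hmem] with z hsm hzz
      have hz0 : 0 < z := hzz.1
      have hQz : z^α > 0 := Real.rpow_pos_of_pos hz0 α
      -- split z^τ * z * z = z^(2+τ-α) * z^α
      have hsplit : z^τ * z * z = z^(2+τ-α) * z^α := by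
        rw [← Real.rpow_add hz0]
        have h2 : (2:ℝ)+τ-α+α = 2+τ := by ring
        rw [h2]
        have h3 : z^((2:ℝ)+τ) = z^(2:ℝ) * z^τ := by
          rw [← Real.rpow_add hz0]
        have h4 : z^(2:ℝ) = z * z := by
          rw [show (2:ℝ) = ((2:ℕ):ℝ) by norm_num, Real.rpow_natCast]; ring
        rw [h3, h4]; ring
      have heqz := hEq z hzz
      have hmaxnn : 0 ≤ c0 * (max 0 (W z))^q :=
        mul_nonneg hc0.le (Real.rpow_nonneg (le_max_left 0 _) q)
      have hkW : 0 ≤ k * W z := mul_nonneg hk (hpos z hzz).le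
      have hVzb := hVb z hzz
      -- σ²/2 W2 z ≤ ρ V 0 + ρ C z^τ z z - z^α Q < 0
      have hkey : σ^2/2 * W2 z < 0 := by
        have h5 : ρ * C * (z^τ * z * z) < Q * z^α := by
          rw [hsplit]
          calc ρ * C * (z^(2+τ-α) * z^α) = (ρ * C * z^(2+τ-α)) * z^α := by ring
          _ < Q * z^α := by exact mul_lt_mul_of_pos_right hsm hQz
        have h6 := mul_le_mul_of_nonneg_left hVzb hρ.le
        linarith
      nlinarith [hkey, hσ2]
    rw [Filter.eventually_iff, mem_nhdsGT_iff_exists_Ioo_subset] at hev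
    obtain ⟨u, hu, hsub⟩ := hev
    set δ := min u zb with hδdef
    have hδ0 : 0 < δ := lt_min hu hz
    have hδzb : δ ≤ zb := min_le_right _ _
    have hanti : StrictAntiOn W (Set.Icc 0 δ) := by
      refine strictAntiOn_of_deriv_neg (convex_Icc _ _)
        (hV'.mono (Set.Icc_subset_Icc le_rfl hδzb)) ?_
      intro x hx
      rw [interior_Icc] at hx
      exact hsub ⟨hx.1, lt_of_lt_of_le hx.2 (min_le_left _ _)⟩
    have hmem2 : δ/2 ∈ Set.Ioo 0 zb := ⟨by linarith, by linarith⟩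
    have := hanti (Set.left_mem_Icc.mpr hδ0.le)
      (⟨by linarith, by linarith⟩ : δ/2 ∈ Set.Icc 0 δ) (by linarith)
    rw [hbc0] at this
    exact absurd (hpos _ hmem2) (by rw [hWdef] at this ⊢; linarith)
  · -- Part B: W2 zb < 0
    by_contra hcon
    push_neg at hcon
    have hVzb0 : zb^α * Q ≤ ρ * V zb := by nlinarith
    -- bound: W z ≤ C * (zb-z)^τ * (zb-z) on (0, zb)
    have hWb : ∀ z ∈ Set.Ioo 0 zb, W z ≤ C * (zb-z)^τ * (zb-z) := by
      intro z hzz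
      obtain ⟨c, hc, hslope⟩ := exists_hasDerivAt_eq_slope W W2 hzz.2
        (hV'.mono (Set.Icc_subset_Icc hzz.1.le le_rfl))
        (fun x hx => (hV'' x ⟨hzz.1.trans hx.1, hx.2⟩).hasDerivAt)
      have hcIcc : c ∈ Set.Icc 0 zb := ⟨(hzz.1.trans hc.1).le, hc.2.le⟩
      have h1 := hHolder zb (Set.right_mem_Icc.mpr hz.le) c hcIcc
      have habs : |zb - c| = zb - c := abs_of_pos (by linarith [hc.2])
      rw [habs] at h1
      have hcτ : (zb-c)^τ ≤ (zb-z)^τ :=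
        Real.rpow_le_rpow (by linarith [hc.2]) (by linarith [hc.1]) hτ0.le
      have hW2c : -(C * (zb-z)^τ) ≤ W2 c := by
        have h2 : W2 zb - W2 c ≤ C * (zb-c)^τ := (le_abs_self _).trans h1
        have h3 : C * (zb-c)^τ ≤ C * (zb-z)^τ := mul_le_mul_of_nonneg_left hcτ hC
        linarith
      have hzbne : zb - z ≠ 0 := sub_ne_zero_of_ne hzz.2.ne'
      have hWz : W2 c * (zb - z) = -(W z) := by
        rw [hbc1, eq_div_iff hzbne] at hslope
        linarith
      have := mul_le_mul_of_nonneg_right hW2c (by linarith [hzz.2] : (0:ℝ) ≤ zb - z)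
      linarith
    -- bound: V zb - C*(zb-z)^τ*(zb-z)*(zb-z) ≤ V z on (0, zb)
    have hVb : ∀ z ∈ Set.Ioo 0 zb, V zb - C * (zb-z)^τ * (zb-z) * (zb-z) ≤ V z := by
      intro z hzz
      obtain ⟨c, hc, hslope⟩ := exists_hasDerivAt_eq_slope V W hzz.2
        (hV.continuousOn.mono (Set.Icc_subset_Icc hzz.1.le le_rfl))
        (fun x hx => by
          have hx' : x ∈ Set.Ioo 0 zb := ⟨hzz.1.trans hx.1, hx.2⟩
          exact (hV.differentiableAt (Icc_mem_nhds hx'.1 hx'.2)).hasDerivAt)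
      have hc' : c ∈ Set.Ioo 0 zb := ⟨hzz.1.trans hc.1, hc.2⟩
      have hWc : W c ≤ C * (zb-z)^τ * (zb-z) := by
        have h0 := hWb c hc'
        have hcτ : (zb-c)^τ ≤ (zb-z)^τ :=
          Real.rpow_le_rpow (by linarith [hc.2]) (by linarith [hc.1]) hτ0.le
        have h3 : C * (zb-c)^τ * (zb-c) ≤ C * (zb-z)^τ * (zb-z) := by
          have h4 : 0 ≤ C * (zb-z)^τ :=
            mul_nonneg hC (Real.rpow_nonneg (by linarith [hzz.2] : (0:ℝ) ≤ zb - z) τ)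
          calc C * (zb-c)^τ * (zb-c) ≤ C * (zb-z)^τ * (zb-c) :=
                mul_le_mul_of_nonneg_right (mul_le_mul_of_nonneg_left hcτ hC)
                  (by linarith [hc.2])
            _ ≤ C * (zb-z)^τ * (zb-z) := mul_le_mul_of_nonneg_left (by linarith [hc.1]) h4
        linarith
      have hzbne : zb - z ≠ 0 := sub_ne_zero_of_ne hzz.2.ne'
      have hVz : W c * (zb - z) = V zb - V z := by
        rw [eq_div_iff hzbne] at hslope
        linarith
      have := mul_le_mul_of_nonneg_right hWc (by linarith [hzz.2] : (0:ℝ) ≤ zb - z)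
      linarith
    -- lower bound for zb^α - z^α
    set A : ℝ := α * zb^(α-1) with hAdef
    have hA : 0 < A := mul_pos hα0 (Real.rpow_pos_of_pos hz (α-1))
    have hzαb : ∀ z ∈ Set.Ioo 0 zb, A * (zb - z) ≤ zb^α - z^α := by
      intro z hzz
      obtain ⟨c, hc, hslope⟩ := exists_hasDerivAt_eq_slope (fun t => t^α)
        (fun t => α * t^(α-1)) hzz.2
        (fun t ht => (Real.continuousAt_rpow_const t α
          (Or.inl (by linarith [ht.1, hzz.1] : t ≠ 0))).continuousWithinAt)
        (fun x hx => Real.hasDerivAt_rpow_const (Or.inl (by linarith [hx.1, hzz.1] : x ≠ 0)))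
      have hc0' : 0 < c := hzz.1.trans hc.1
      have hcb : zb^(α-1) ≤ c^(α-1) :=
        Real.rpow_le_rpow_of_nonpos hc0' hc.2.le (by linarith)
      have hzbne : zb - z ≠ 0 := sub_ne_zero_of_ne hzz.2.ne'
      have hd : α * c^(α-1) * (zb - z) = zb^α - z^α := by
        rw [eq_div_iff hzbne] at hslope
        linarith
      have hne : (0:ℝ) ≤ zb - z := by linarith [hzz.2]
      have := mul_le_mul_of_nonneg_right (mul_le_mul_of_nonneg_left hcb hα0.le) hne
      rw [hAdef]
      linarith
    -- eventually W2 z > 0 near zb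
    have hev : ∀ᶠ z in 𝓝[<] zb, 0 < W2 z := by
      have hh : Filter.Tendsto (fun z : ℝ => zb - z) (𝓝[<] zb) (𝓝 0) := by
        have : Filter.Tendsto (fun z : ℝ => zb - z) (𝓝 zb) (𝓝 (zb - zb)) :=
          tendsto_const_nhds.sub tendsto_id
        rw [sub_self] at this
        exact this.mono_left nhdsWithin_le_nhds
      have hhτ : Filter.Tendsto (fun z : ℝ => (zb - z)^τ) (𝓝[<] zb) (𝓝 0) := by
        have h1 : Filter.Tendsto (fun t : ℝ => t^τ) (𝓝 (0:ℝ)) (𝓝 ((0:ℝ)^τ)) :=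
          (Real.continuousAt_rpow_const 0 τ (Or.inr hτ0.le)).tendsto
        rw [Real.zero_rpow hτ0.ne'] at h1
        exact h1.comp hh
      have hg : Filter.Tendsto
          (fun z : ℝ => ρ*C*((zb-z)^τ*(zb-z)) + c0*C*(zb-z)^τ + k*C*(zb-z)^τ)
          (𝓝[<] zb) (𝓝 0) := by
        have := ((((hhτ.mul hh).const_mul (ρ*C)).add ((hhτ.const_mul (c0*C)))).add
          (hhτ.const_mul (k*C)))
        simpa using this
      have hsmall : ∀ᶠ z in 𝓝[<] zb,
          ρ*C*((zb-z)^τ*(zb-z)) + c0*C*(zb-z)^τ + k*C*(zb-z)^τ < A * Q :=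
        hg.eventually_lt_const (by positivity)
      have hone : ∀ᶠ z in 𝓝[<] zb, C * (zb-z)^τ * (zb-z) < 1 := by
        have ht := (hhτ.mul hh).const_mul C
        rw [mul_zero, mul_zero] at ht
        simpa [mul_assoc] using ht.eventually_lt_const one_pos
      have hmem : ∀ᶠ z in 𝓝[<] zb, z ∈ Set.Ioo 0 zb :=
        Filter.eventually_of_mem (Ioo_mem_nhdsLT hz) fun z hzz => hzz
      filter_upwards [hsmall, hone, hmem] with z hsm h1 hzz
      have hh0 : 0 < zb - z := by linarith [hzz.2]
      have hWz := hpos z hzz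
      have hWzb := hWb z hzz
      have hx0 : 0 < C * (zb-z)^τ * (zb-z) := lt_of_lt_of_le hWz hWzb
      -- bound the nonlinear term
      have hpowb : (W z)^q ≤ C * (zb-z)^τ * (zb-z) := by
        calc (W z)^q ≤ (C * (zb-z)^τ * (zb-z))^q := Real.rpow_le_rpow hWz.le hWzb hq0.le
        _ ≤ (C * (zb-z)^τ * (zb-z))^(1:ℝ) :=
            Real.rpow_le_rpow_of_exponent_ge hx0 h1.le hq1
        _ = C * (zb-z)^τ * (zb-z) := Real.rpow_one _
      have hmaxW : max 0 (W z) = W z := max_eq_right hWz.le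
      have heqz := hEq z hzz
      rw [hmaxW] at heqz
      have hVzlb := hVb z hzz
      have hzab := hzαb z hzz
      -- assemble
      have hkey : 0 < σ^2/2 * W2 z := by
        have e1 := mul_le_mul_of_nonneg_left hVzlb hρ.le
        have e2 : c0 * (W z)^q ≤ c0 * (C * (zb-z)^τ * (zb-z)) :=
          mul_le_mul_of_nonneg_left hpowb hc0.le
        have e3 : k * W z ≤ k * (C * (zb-z)^τ * (zb-z)) :=
          mul_le_mul_of_nonneg_left hWzb hk
        have e4 := mul_le_mul_of_nonneg_right hzab hQ.le
        have e5 := mul_lt_mul_of_pos_right hsm hh0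
        linarith
      nlinarith [hkey, hσ2]
    rw [Filter.eventually_iff, mem_nhdsLT_iff_exists_Ioo_subset] at hev
    obtain ⟨l, hl, hsub⟩ := hev
    set m := max l 0 with hmdef
    have hm0 : 0 ≤ m := le_max_right _ _
    have hmzb : m < zb := max_lt hl hz
    have hmono : StrictMonoOn W (Set.Icc m zb) := by
      refine strictMonoOn_of_deriv_pos (convex_Icc _ _)
        (hV'.mono (Set.Icc_subset_Icc hm0 le_rfl)) ?_
      intro x hx
      rw [interior_Icc] at hx
      exact hsub ⟨lt_of_le_of_lt (le_max_left _ _) hx.1, hx.2⟩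
    have hm'mem : (m + zb)/2 ∈ Set.Ioo 0 zb := ⟨by linarith, by linarith⟩
    have := hmono (⟨by linarith, by linarith⟩ : (m + zb)/2 ∈ Set.Icc m zb)
      (Set.right_mem_Icc.mpr (by linarith)) (by linarith)
    rw [hbc1] at this
    exact absurd (hpos _ hm'mem) (by rw [hWdef] at this ⊢; linarith)
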